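/- Let Φ satisfy Condition L with constant 𝒦 > 0, let h be a probability density on [0,1], and let u, v : [0,1] × [0,1]^P → ℝ be bounded measurable functions. Then for every y ∈ [0,1] and x ∈ [0,1]^P, f_u(y∣x) / f_v(y∣x) ≤ exp(2𝒦 ‖u − v‖_∞). In particular, log ‖f_u/f_v‖_∞ ≤ 2𝒦 ‖u − v‖_∞. -/

import Mathlib

open MeasureTheory

/-- **Ratio bound for tilted conditional densities.**
If `Φ` satisfies Condition L with constant `𝒦 > 0`, `h` is a density on `[0,1]`, and `u, v`
are bounded (by `M ≥ ‖u - v‖_∞`) measurable functions, then for every `y ∈ [0,1]` and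
`x ∈ [0,1]^P`, `f_u(y∣x) / f_v(y∣x) ≤ exp(2𝒦 M)`; in particular
`log (f_u(y∣x)/f_v(y∣x)) ≤ 2𝒦 M`. -/
lemma phi_exp_bound (Φ φ : ℝ → ℝ) (𝒦 : ℝ)
    (hderiv : ∀ x, HasDerivAt Φ (φ x) x)
    (hmono : StrictMono Φ)
    (hpos : ∀ x, 0 < Φ x)
    (hratio : ∀ x, φ x / Φ x ≤ 𝒦) :
    ∀ a b M : ℝ, 0 ≤ M → a - b ≤ M → Φ a ≤ Real.exp (𝒦 * M) * Φ b := by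
  have hG : ∀ t : ℝ, HasDerivAt (fun s => Φ s * Real.exp (-𝒦 * s))
      ((φ t - 𝒦 * Φ t) * Real.exp (-𝒦 * t)) t := by
    intro t
    have h1 : HasDerivAt (fun s : ℝ => Real.exp (-𝒦 * s)) (Real.exp (-𝒦 * t) * -𝒦) t := by
      simpa using (((hasDerivAt_id t).const_mul (-𝒦)).exp)
    have : HasDerivAt (fun s => Φ s * Real.exp (-𝒦 * s))
        (φ t * Real.exp (-𝒦 * t) + Φ t * (Real.exp (-𝒦 * t) * -𝒦)) t := (hderiv t).mul h1
    convert this using 1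
    ring
  have hanti : Antitone (fun s => Φ s * Real.exp (-𝒦 * s)) := by
    apply antitone_of_deriv_nonpos
    · exact fun t => (hG t).differentiableAt
    · intro t
      rw [(hG t).deriv]
      apply mul_nonpos_of_nonpos_of_nonneg
      · have := hratio t
        have hp := hpos t
        nlinarith [(div_le_iff₀ hp).mp this]
      · exact (Real.exp_pos _).le
  intro a b M hM hab
  have h1 : Φ a ≤ Φ (b + M) := hmono.monotone (by linarith)
  have h2 := hanti (le_add_of_nonneg_right hM : b ≤ b + M)
  simp only at h2
  -- h2 : Φ (b+M) * exp (-𝒦*(b+M)) ≤ Φ b * exp (-𝒦*b)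
  have h3 : Φ (b + M) ≤ Real.exp (𝒦 * M) * Φ b := by
    calc Φ (b + M) = Φ (b + M) * Real.exp (-𝒦 * (b + M)) * Real.exp (𝒦 * (b + M)) := by
          rw [mul_assoc, ← Real.exp_add]; simp
      _ ≤ Φ b * Real.exp (-𝒦 * b) * Real.exp (𝒦 * (b + M)) :=
          mul_le_mul_of_nonneg_right h2 (Real.exp_pos _).le
      _ = Real.exp (𝒦 * M) * Φ b := by
          rw [mul_assoc, ← Real.exp_add, show -𝒦 * b + 𝒦 * (b + M) = 𝒦 * M by ring, mul_comm]
  linarith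

theorem stmt8 (P : ℕ) (Φ φ : ℝ → ℝ) (𝒦 : ℝ) (h𝒦 : 0 < 𝒦)
    (hderiv : ∀ x, HasDerivAt Φ (φ x) x)
    (hmono : StrictMono Φ)
    (h01 : ∀ x, 0 < Φ x ∧ Φ x < 1)
    (hratio : ∀ x, φ x / Φ x ≤ 𝒦)
    (h : ℝ → ℝ) (hh_meas : Measurable h) (hh_nonneg : ∀ y, 0 ≤ h y)
    (hh_int : (∫ y in Set.Icc (0:ℝ) 1, h y) = 1)
    (u v : ℝ → (Fin P → ℝ) → ℝ)
    (hu_meas : Measurable (Function.uncurry u))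
    (hv_meas : Measurable (Function.uncurry v))
    (M : ℝ)
    (hM : ∀ y ∈ Set.Icc (0:ℝ) 1, ∀ x ∈ Set.univ.pi fun _ : Fin P => Set.Icc (0:ℝ) 1,
        |u y x - v y x| ≤ M)
    (f : (ℝ → (Fin P → ℝ) → ℝ) → ℝ → (Fin P → ℝ) → ℝ)
    (hf : f = fun w y x => h y * Φ (w y x) / ∫ t in Set.Icc (0:ℝ) 1, h t * Φ (w t x)) :
    ∀ y ∈ Set.Icc (0:ℝ) 1, ∀ x ∈ Set.univ.pi fun _ : Fin P => Set.Icc (0:ℝ) 1,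
      f u y x / f v y x ≤ Real.exp (2 * 𝒦 * M) ∧
      Real.log (f u y x / f v y x) ≤ 2 * 𝒦 * M := by
  subst hf
  have hΦpos : ∀ t, 0 < Φ t := fun t => (h01 t).1
  have hΦlt : ∀ t, Φ t < 1 := fun t => (h01 t).2
  have hΦcont : Continuous Φ :=
    continuous_iff_continuousAt.mpr fun t => (hderiv t).continuousAt
  have hM0 : 0 ≤ M := by
    refine le_trans (abs_nonneg _) (hM 0 ⟨le_refl 0, zero_le_one⟩ (fun _ => 0) ?_)
    intro i _; exact ⟨le_refl 0, zero_le_one⟩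
  have hh_integ : IntegrableOn h (Set.Icc (0:ℝ) 1) := by
    by_contra hc
    rw [MeasureTheory.integral_undef hc] at hh_int
    exact absurd hh_int zero_ne_one
  have key := phi_exp_bound Φ φ 𝒦 hderiv hmono hΦpos hratio
  intro y hy x hx
  -- measurability in t for fixed x
  have hmea : ∀ (w : ℝ → (Fin P → ℝ) → ℝ), Measurable (Function.uncurry w) →
      Measurable fun t => w t x := by
    intro w hw
    exact hw.comp (measurable_id.prodMk measurable_const)
  have hint : ∀ (w : ℝ → (Fin P → ℝ) → ℝ), Measurable (Function.uncurry w) →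
      IntegrableOn (fun t => h t * Φ (w t x)) (Set.Icc (0:ℝ) 1) := by
    intro w hw
    refine MeasureTheory.Integrable.mono hh_integ ((hh_meas.mul (hΦcont.measurable.comp (hmea w hw))).aestronglyMeasurable) ?_
    filter_upwards with t
    rw [Real.norm_eq_abs, Real.norm_eq_abs, abs_of_nonneg (hh_nonneg t),
      abs_of_nonneg (mul_nonneg (hh_nonneg t) (hΦpos _).le)]
    nlinarith [hh_nonneg t, hΦpos (w t x), hΦlt (w t x)]
  have hIpos : ∀ (w : ℝ → (Fin P → ℝ) → ℝ), Measurable (Function.uncurry w) →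
      0 < ∫ t in Set.Icc (0:ℝ) 1, h t * Φ (w t x) := by
    intro w hw
    have hnn : 0 ≤ ∫ t in Set.Icc (0:ℝ) 1, h t * Φ (w t x) :=
      setIntegral_nonneg measurableSet_Icc fun t _ => mul_nonneg (hh_nonneg t) (hΦpos _).le
    rcases hnn.lt_or_eq with hlt | heq
    · exact hlt
    · exfalso
      have hae : (fun t => h t * Φ (w t x)) =ᵐ[volume.restrict (Set.Icc (0:ℝ) 1)] 0 := by
        rw [← MeasureTheory.integral_eq_zero_iff_of_nonneg ?_ (hint w hw)]
        · exact heq.symm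
        · intro t; exact mul_nonneg (hh_nonneg t) (hΦpos _).le
      have hae2 : h =ᵐ[volume.restrict (Set.Icc (0:ℝ) 1)] 0 := by
        filter_upwards [hae] with t ht
        have := hΦpos (w t x)
        simp only [Pi.zero_apply] at ht ⊢
        by_contra hne
        exact hne (by nlinarith [mul_eq_zero.mp ht])
      have : (∫ t in Set.Icc (0:ℝ) 1, h t) = 0 := by
        rw [MeasureTheory.integral_congr_ae hae2]; simp
      rw [this] at hh_int; exact zero_ne_one hh_int
  set Iu := ∫ t in Set.Icc (0:ℝ) 1, h t * Φ (u t x) with hIu_def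
  set Iv := ∫ t in Set.Icc (0:ℝ) 1, h t * Φ (v t x) with hIv_def
  have hIu : 0 < Iu := hIpos u hu_meas
  have hIv : 0 < Iv := hIpos v hv_meas
  set K := Real.exp (𝒦 * M) with hK_def
  have hKpos : 0 < K := Real.exp_pos _
  have e1 : Φ (u y x) ≤ K * Φ (v y x) := by
    refine key _ _ M hM0 ?_
    have := hM y hy x hx
    exact le_trans (le_abs_self _) this
  have e2 : Iv ≤ K * Iu := by
    have step : Iv ≤ ∫ t in Set.Icc (0:ℝ) 1, K * (h t * Φ (u t x)) := by
      refine setIntegral_mono_on (hint v hv_meas) ((hint u hu_meas).const_mul K)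
        measurableSet_Icc ?_
      intro t ht
      have habs := hM t ht x hx
      have hb : Φ (v t x) ≤ K * Φ (u t x) := by
        refine key _ _ M hM0 ?_
        have := abs_le.mp habs
        linarith [this.1]
      nlinarith [hh_nonneg t]
    rwa [MeasureTheory.integral_const_mul] at step
  have hE : Real.exp (2 * 𝒦 * M) = K * K := by
    rw [hK_def, ← Real.exp_add]; ring_nf
  by_cases hhy : h y = 0
  · constructor
    · simp [hhy, (Real.exp_pos _).le]
    · simp [hhy]
      nlinarith
  · have hy0 : 0 < h y := (hh_nonneg y).lt_of_ne (Ne.symm hhy)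
    have hfv : 0 < h y * Φ (v y x) / Iv := div_pos (mul_pos hy0 (hΦpos _)) hIv
    have hfu : 0 < h y * Φ (u y x) / Iu := div_pos (mul_pos hy0 (hΦpos _)) hIu
    have hratio_pos : 0 < (h y * Φ (u y x) / Iu) / (h y * Φ (v y x) / Iv) :=
      div_pos hfu hfv
    have keyeq : (h y * Φ (u y x) / Iu) / (h y * Φ (v y x) / Iv)
        = (Φ (u y x) * Iv) / (Φ (v y x) * Iu) := by
      field_simp [hhy, (hΦpos (v y x)).ne', hIu.ne', hIv.ne']
    have hbound : (h y * Φ (u y x) / Iu) / (h y * Φ (v y x) / Iv) ≤ Real.exp (2 * 𝒦 * M) := by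
      rw [keyeq, hE, div_le_iff₀ (mul_pos (hΦpos _) hIu)]
      nlinarith [mul_le_mul e1 e2 hIv.le (mul_nonneg hKpos.le (hΦpos (v y x)).le)]
    exact ⟨hbound, (Real.log_le_iff_le_exp hratio_pos).mpr (by rwa [Real.exp_eq_exp.mpr rfl])⟩
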